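/- Let Z be a finite multiset of scored labeled points with label counts (n1, n2), n1, n2 > 0, and let r_i (for the sorted unique scores s_1 < ... < s_k) be the cumulative label-count pairs r_i = Σ_{z: score(z) ≤ s_i} w(z), where w(z) = (1,0) for label 1 and (0,1) for label 2. Then the area under the piecewise-linear ROC curve through the normalized points x_0 = (0,0), x_i = (r_{i,1}/n1, r_{i,2}/n2), computed as Σ_{i=1}^{k} (x_{i,2} − x_{i−1,2})·(x_{i,1} + x_{i−1,1})/2 (trapezoid rule with the 2nd coordinate as the horizontal axis), equals U/(n1·n2), where U is the Mann-Whitney statistic of Z. -/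

import Mathlib

/-- The Mann-Whitney comparison function. -/
noncomputable def mwf (s t : ℝ) : ℝ := if s < t then 1 else if s = t then 1/2 else 0

/-- The Mann-Whitney U statistic of a multiset of (score, label) pairs,
comparing the scores of label-1 points to the scores of label-2 points. -/
noncomputable def mwStat (Z : Multiset (ℝ × ℕ)) : ℝ :=
  (((Z.filter (fun z => z.2 = 1)).map Prod.fst).map
      (fun s => (((Z.filter (fun z => z.2 = 2)).map Prod.fst).map (fun t => mwf s t)).sum)).sum

/-- Number of points of label `ℓ` in `Z`, as a real. -/
noncomputable def lblCount (Z : Multiset (ℝ × ℕ)) (ℓ : ℕ) : ℝ :=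
  ((Z.filter (fun z => z.2 = ℓ)).card : ℝ)

/-- Number of points of label `ℓ` in `Z` with score at most `t`, as a real. -/
noncomputable def cumCount (Z : Multiset (ℝ × ℕ)) (ℓ : ℕ) (t : ℝ) : ℝ :=
  ((Z.filter (fun z => z.2 = ℓ ∧ z.1 ≤ t)).card : ℝ)

/-- The sorted list of unique scores of `Z`. -/
noncomputable def uniqueScores (Z : Multiset (ℝ × ℕ)) : List ℝ :=
  (Z.map Prod.fst).toFinset.sort (· ≤ ·)

/-- The `i`-th point of the ROC curve of `Z`: `(0,0)` for `i = 0`, and for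
`1 ≤ i` the normalized cumulative label counts at the `i`-th smallest unique score. -/
noncomputable def rocPoint (Z : Multiset (ℝ × ℕ)) (i : ℕ) : ℝ × ℝ :=
  if i = 0 then (0, 0)
  else
    (cumCount Z 1 ((uniqueScores Z).getD (i - 1) 0) / lblCount Z 1,
      cumCount Z 2 ((uniqueScores Z).getD (i - 1) 0) / lblCount Z 2)

namespace MWaux
open Finset

noncomputable def cnt (Z : Multiset (ℝ × ℕ)) (ℓ : ℕ) (j : ℕ) : ℝ :=
  ((Z.filter (fun z => z.2 = ℓ ∧ z.1 = (uniqueScores Z).getD j 0)).card : ℝ)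

lemma sorted_lt (Z : Multiset (ℝ × ℕ)) : (uniqueScores Z).Pairwise (· < ·) :=
  (Finset.sortedLT_sort _).pairwise

lemma mem_scores {Z : Multiset (ℝ × ℕ)} {z : ℝ × ℕ} (hz : z ∈ Z) :
    z.1 ∈ uniqueScores Z := by
  simp only [uniqueScores, Finset.mem_sort, Multiset.mem_toFinset, Multiset.mem_map]
  exact ⟨z, hz, rfl⟩

lemma getD_lt_getD {Z : Multiset (ℝ × ℕ)} {i j : ℕ}
    (hj : j < (uniqueScores Z).length) (hij : i < j) :
    (uniqueScores Z).getD i 0 < (uniqueScores Z).getD j 0 := by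
  rw [List.getD_eq_getElem _ _ (lt_trans hij hj), List.getD_eq_getElem _ _ hj]
  exact List.pairwise_iff_get.mp (sorted_lt Z) ⟨i, lt_trans hij hj⟩ ⟨j, hj⟩ hij

lemma getD_le_iff {Z : Multiset (ℝ × ℕ)} {i j : ℕ}
    (hi : i < (uniqueScores Z).length) (hj : j < (uniqueScores Z).length) :
    (uniqueScores Z).getD i 0 ≤ (uniqueScores Z).getD j 0 ↔ i ≤ j := by
  constructor
  · intro h
    by_contra hc
    exact absurd (getD_lt_getD hi (Nat.lt_of_not_le hc)) (not_lt.mpr h)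
  · intro h
    rcases Nat.lt_or_ge i j with h' | h'
    · exact le_of_lt (getD_lt_getD hj h')
    · have : i = j := le_antisymm h h'
      subst this; rfl

lemma getD_eq_iff {Z : Multiset (ℝ × ℕ)} {i j : ℕ}
    (hi : i < (uniqueScores Z).length) (hj : j < (uniqueScores Z).length) :
    (uniqueScores Z).getD i 0 = (uniqueScores Z).getD j 0 ↔ i = j := by
  constructor
  · intro h
    exact le_antisymm ((getD_le_iff hi hj).mp h.le) ((getD_le_iff hj hi).mp h.ge)
  · rintro rfl; rfl

lemma exists_idx {Z : Multiset (ℝ × ℕ)} {z : ℝ × ℕ} (hz : z ∈ Z) :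
    ∃ m, ∃ _ : m < (uniqueScores Z).length, z.1 = (uniqueScores Z).getD m 0 := by
  obtain ⟨⟨m, hm⟩, h⟩ := List.mem_iff_get.mp (mem_scores hz)
  exact ⟨m, hm, by rw [List.getD_eq_getElem _ _ hm, ← h]; rfl⟩

lemma cum (Z : Multiset (ℝ × ℕ)) (ℓ : ℕ) :
    ∀ i, i < (uniqueScores Z).length →
      cumCount Z ℓ ((uniqueScores Z).getD i 0) = ∑ j ∈ range (i + 1), cnt Z ℓ j := by
  intro i
  induction i with
  | zero =>
    intro h0
    rw [Finset.sum_range_one]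
    unfold cumCount cnt
    congr 2
    apply Multiset.filter_congr
    intro z hz
    obtain ⟨m, hm, hzm⟩ := exists_idx hz
    constructor
    · rintro ⟨h1, h2⟩
      refine ⟨h1, ?_⟩
      rw [hzm] at h2 ⊢
      rw [getD_eq_iff hm h0]
      exact Nat.le_zero.mp ((getD_le_iff hm h0).mp h2)
    · rintro ⟨h1, h2⟩
      exact ⟨h1, le_of_eq h2⟩
  | succ i ih =>
    intro h
    have hi : i < (uniqueScores Z).length := Nat.lt_of_succ_lt h
    rw [Finset.sum_range_succ, ← ih hi]
    unfold cumCount cnt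
    rw [← Nat.cast_add]
    congr 1
    set p : ℝ × ℕ → Prop := fun z => z.2 = ℓ ∧ z.1 ≤ (uniqueScores Z).getD i 0 with hp
    set q : ℝ × ℕ → Prop := fun z => z.2 = ℓ ∧ z.1 = (uniqueScores Z).getD (i+1) 0 with hq
    have key : Multiset.filter p Z + Multiset.filter q Z
        = Multiset.filter (fun z => p z ∨ q z) Z + Multiset.filter (fun z => p z ∧ q z) Z :=
      Multiset.filter_add_filter p q Z
    have h2 : Multiset.filter (fun z => p z ∧ q z) Z = 0 := by
      rw [Multiset.filter_eq_nil]
      rintro z hz ⟨⟨_, hle⟩, ⟨_, heq⟩⟩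
      have := getD_lt_getD (Z := Z) h (Nat.lt_succ_self i)
      rw [← heq] at this
      exact absurd hle (not_le.mpr this)
    have h3 : Multiset.filter (fun z => p z ∨ q z) Z
        = Multiset.filter (fun z => z.2 = ℓ ∧ z.1 ≤ (uniqueScores Z).getD (i+1) 0) Z := by
      apply Multiset.filter_congr
      intro z hz
      obtain ⟨m, hm, hzm⟩ := exists_idx hz
      simp only [hp, hq, hzm]
      constructor
      · rintro (⟨h1, h2⟩ | ⟨h1, h2⟩)
        · exact ⟨h1, le_trans h2 (le_of_lt (getD_lt_getD h (Nat.lt_succ_self i)))⟩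
        · exact ⟨h1, le_of_eq h2⟩
      · rintro ⟨h1, h2⟩
        rw [getD_le_iff hm h] at h2
        rcases Nat.lt_succ_iff_lt_or_eq.mp (Nat.lt_succ_of_le h2) with h' | h'
        · exact Or.inl ⟨h1, (getD_le_iff hm hi).mpr (Nat.lt_succ_iff.mp h')⟩
        · exact Or.inr ⟨h1, (getD_eq_iff hm h).mpr h'⟩
    have := congrArg Multiset.card key
    rw [Multiset.card_add, h2, h3, Multiset.card_add, Multiset.card_zero, add_zero] at this
    exact this.symm

lemma msum_eq (m : Multiset ℝ) (F : Finset ℝ) (hF : ∀ x ∈ m, x ∈ F) (f : ℝ → ℝ) :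
    (m.map f).sum = ∑ x ∈ F, (m.count x : ℝ) * f x := by
  rw [Finset.sum_multiset_map_count]
  rw [Finset.sum_subset (fun x hx => hF x (Multiset.mem_toFinset.mp hx))]
  · apply Finset.sum_congr rfl
    intro x _
    rw [nsmul_eq_mul]
  · intro x _ hx
    rw [Multiset.count_eq_zero_of_notMem (fun h => hx (Multiset.mem_toFinset.mpr h)), zero_smul]

lemma list_sum_eq (L : List ℝ) (f : ℝ → ℝ) :
    (L.map f).sum = ∑ i ∈ range L.length, f (L.getD i 0) := by
  induction L with
  | nil => simp
  | cons a t ih =>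
    rw [List.map_cons, List.sum_cons, ih, List.length_cons, Finset.sum_range_succ']
    simp [List.getD, add_comm]

lemma finset_sum_eq (F : Finset ℝ) (f : ℝ → ℝ) :
    ∑ x ∈ F, f x = ∑ i ∈ range (F.sort (· ≤ ·)).length, f ((F.sort (· ≤ ·)).getD i 0) := by
  rw [← list_sum_eq, ← Finset.sum_map_toList]
  exact (List.Perm.map f (Finset.sort_perm_toList (r := (· ≤ ·)) (s := F))).sum_eq.symm

lemma count_eq_cnt (Z : Multiset (ℝ × ℕ)) (ℓ : ℕ) (i : ℕ) :
    ((((Z.filter (fun z => z.2 = ℓ)).map Prod.fst).count ((uniqueScores Z).getD i 0) : ℕ) : ℝ)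
      = cnt Z ℓ i := by
  rw [Multiset.count_map, Multiset.filter_filter]
  unfold cnt
  congr 2
  apply Multiset.filter_congr
  intro z _
  constructor
  · rintro ⟨h1, h2⟩; exact ⟨h2, h1.symm⟩
  · rintro ⟨h1, h2⟩; exact ⟨h2.symm, h1⟩

lemma mwStat_eq (Z : Multiset (ℝ × ℕ)) :
    mwStat Z = ∑ i ∈ range (uniqueScores Z).length, ∑ j ∈ range (uniqueScores Z).length,
      cnt Z 1 i * (cnt Z 2 j *
        mwf ((uniqueScores Z).getD i 0) ((uniqueScores Z).getD j 0)) := by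
  have hmem : ∀ ℓ : ℕ, ∀ x ∈ (Z.filter (fun z => z.2 = ℓ)).map Prod.fst,
      x ∈ (Z.map Prod.fst).toFinset := by
    intro ℓ x hx
    obtain ⟨z, hz, rfl⟩ := Multiset.mem_map.mp hx
    exact Multiset.mem_toFinset.mpr (Multiset.mem_map_of_mem _ (Multiset.mem_of_mem_filter hz))
  set F := (Z.map Prod.fst).toFinset with hF
  unfold mwStat
  rw [msum_eq _ F (hmem 1)]
  have : ∀ s : ℝ, (((Z.filter (fun z => z.2 = 2)).map Prod.fst).map (fun t => mwf s t)).sum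
      = ∑ x ∈ F, (((Z.filter (fun z => z.2 = 2)).map Prod.fst).count x : ℝ) * mwf s x := by
    intro s; exact msum_eq _ F (hmem 2) _
  simp only [this]
  have hsort : uniqueScores Z = F.sort (· ≤ ·) := rfl
  rw [finset_sum_eq]
  rw [← hsort]
  apply Finset.sum_congr rfl
  intro i _
  rw [Finset.mul_sum, finset_sum_eq, ← hsort]
  apply Finset.sum_congr rfl
  intro j _
  rw [count_eq_cnt, count_eq_cnt]

lemma mwStat_eval (Z : Multiset (ℝ × ℕ)) :
    mwStat Z = ∑ j ∈ range (uniqueScores Z).length,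
      (cnt Z 2 j * ∑ i ∈ range j, cnt Z 1 i + cnt Z 1 j * cnt Z 2 j / 2) := by
  rw [mwStat_eq, Finset.sum_comm]
  apply Finset.sum_congr rfl
  intro j hj
  rw [Finset.mem_range] at hj
  have hpt : ∀ i ∈ range (uniqueScores Z).length,
      cnt Z 1 i * (cnt Z 2 j * mwf ((uniqueScores Z).getD i 0) ((uniqueScores Z).getD j 0))
        = (if i < j then cnt Z 1 i * cnt Z 2 j else 0)
          + (if i = j then cnt Z 1 i * cnt Z 2 j / 2 else 0) := by
    intro i hi
    rw [Finset.mem_range] at hi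
    rcases lt_trichotomy i j with h | h | h
    · rw [if_pos h, if_neg (Nat.ne_of_lt h)]
      unfold mwf
      rw [if_pos (getD_lt_getD hj h)]
      ring
    · subst h
      rw [if_neg (lt_irrefl i), if_pos rfl]
      unfold mwf
      rw [if_neg (lt_irrefl _), if_pos rfl]
      ring
    · rw [if_neg (Nat.not_lt_of_gt h), if_neg (Nat.ne_of_gt h)]
      unfold mwf
      rw [if_neg (not_lt.mpr (le_of_lt (getD_lt_getD hi h))),
        if_neg (ne_of_gt (getD_lt_getD hi h))]
      ring
  rw [Finset.sum_congr rfl hpt, Finset.sum_add_distrib]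
  congr 1
  · rw [← Finset.sum_filter]
    have hfil : (range (uniqueScores Z).length).filter (fun i => i < j) = range j := by
      ext x
      simp only [Finset.mem_filter, Finset.mem_range]
      omega
    rw [hfil, ← Finset.sum_mul, mul_comm]
  · rw [Finset.sum_ite_eq' (range (uniqueScores Z).length) j
      (fun i => cnt Z 1 i * cnt Z 2 j / 2), if_pos (Finset.mem_range.mpr hj)]

lemma roc_eq (Z : Multiset (ℝ × ℕ)) (i : ℕ) (hik : i ≤ (uniqueScores Z).length) :
    rocPoint Z i = ((∑ j ∈ range i, cnt Z 1 j) / lblCount Z 1,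
      (∑ j ∈ range i, cnt Z 2 j) / lblCount Z 2) := by
  cases i with
  | zero => simp [rocPoint]
  | succ m =>
    have hm : m < (uniqueScores Z).length := hik
    unfold rocPoint
    rw [if_neg (Nat.succ_ne_zero m)]
    have h1 := cum Z 1 m hm
    have h2 := cum Z 2 m hm
    simp only [Nat.succ_sub_one]
    rw [h1, h2]

end MWaux

theorem trapezoid_auc_eq_mannWhitney (Z : Multiset (ℝ × ℕ))
    (hlab : ∀ z ∈ Z, z.2 = 1 ∨ z.2 = 2)
    (hn1 : (Z.filter (fun z => z.2 = 1)) ≠ 0)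
    (hn2 : (Z.filter (fun z => z.2 = 2)) ≠ 0) :
    ∑ i ∈ Finset.Icc 1 (uniqueScores Z).length,
        ((rocPoint Z i).2 - (rocPoint Z (i - 1)).2)
          * ((rocPoint Z i).1 + (rocPoint Z (i - 1)).1) / 2
      = mwStat Z / (lblCount Z 1 * lblCount Z 2) := by
  classical
  open MWaux Finset in
  set k := (uniqueScores Z).length with hk
  have hN1 : lblCount Z 1 ≠ 0 := by
    unfold lblCount
    exact Nat.cast_ne_zero.mpr (fun h => hn1 (Multiset.card_eq_zero.mp h))
  have hN2 : lblCount Z 2 ≠ 0 := by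
    unfold lblCount
    exact Nat.cast_ne_zero.mpr (fun h => hn2 (Multiset.card_eq_zero.mp h))
  rw [← Finset.Ico_add_one_right_eq_Icc, Finset.sum_Ico_eq_sum_range]
  rw [mwStat_eval, ← Finset.sum_div, Nat.add_sub_cancel]
  rw [div_eq_div_iff (two_ne_zero) (mul_ne_zero hN1 hN2)]
  rw [Finset.sum_mul, Finset.sum_mul]
  apply Finset.sum_congr rfl
  intro i hi
  rw [Finset.mem_range] at hi
  have e1 : rocPoint Z (1 + i) = ((∑ j ∈ range (1 + i), cnt Z 1 j) / lblCount Z 1,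
      (∑ j ∈ range (1 + i), cnt Z 2 j) / lblCount Z 2) := roc_eq Z (1 + i) (by omega)
  have e0 : rocPoint Z (1 + i - 1) = ((∑ j ∈ range i, cnt Z 1 j) / lblCount Z 1,
      (∑ j ∈ range i, cnt Z 2 j) / lblCount Z 2) := by
    have h' : 1 + i - 1 = i := by omega
    rw [h']
    exact roc_eq Z i (le_of_lt hi)
  rw [e1, e0]
  have hone : 1 + i = i + 1 := by omega
  rw [hone, Finset.sum_range_succ, Finset.sum_range_succ]
  field_simp
  ring
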